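/- Let w ≤ -1 be an integer, let S be a combinatorial w-Hom configuration having exactly k outer-isolated vertices, and let s ∈ S be an arc with no overarc in S. Then there are exactly k + 1 d-admissible arcs a such that (S \ {s}) ∪ {a} is a combinatorial w-Hom configuration (one of these arcs being s itself); equivalently, s has exactly k replacements. -/

import Mathlib

open Set

/-- An arc of the `∞`-gon: a pair of integers `(t, u)`, source `t`, target `u`. -/
abbrev Arc := ℤ × ℤ

/-- `(t,u)` is `d`-admissible for `d = w - 1`: `u - t ≤ w` and `u - t ≡ 1 (mod d)`. -/
def IsAdmissible (w : ℤ) (a : Arc) : Prop :=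
  a.2 - a.1 ≤ w ∧ (w - 1) ∣ (a.2 - a.1 - 1)

/-- `p` is an endpoint of the arc `a`. -/
def IsEndpoint (p : ℤ) (a : Arc) : Prop := p = a.1 ∨ p = a.2

/-- `b = (v,x)` is an overarc of `a = (t,u)` if `x < u < t < v`. -/
def OverarcOf (b a : Arc) : Prop := b.2 < a.2 ∧ a.2 < a.1 ∧ a.1 < b.1

/-- `b = (v,x)` is an overarc of the integer `p` if `x < p < v`. -/
def OverarcOfVertex (b : Arc) (p : ℤ) : Prop := b.2 < p ∧ p < b.1

/-- Arcs `a` and `b` share an endpoint. -/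
def SharesEndpoint (a b : Arc) : Prop :=
  a.1 = b.1 ∨ a.1 = b.2 ∨ a.2 = b.1 ∨ a.2 = b.2

/-- Arcs `a = (t,u)` and `b = (v,x)` strictly cross: `u < x < t < v` or `x < u < v < t`. -/
def StrictCross (a b : Arc) : Prop :=
  (a.2 < b.2 ∧ b.2 < a.1 ∧ a.1 < b.1) ∨ (b.2 < a.2 ∧ a.2 < b.1 ∧ b.1 < a.1)

/-- Two arcs cross if they share an endpoint or strictly cross. -/
def Cross (a b : Arc) : Prop := SharesEndpoint a b ∨ StrictCross a b

/-- `p` is isolated with respect to `X` if it is an endpoint of no arc of `X`. -/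
def Isolated (X : Set Arc) (p : ℤ) : Prop := ∀ a ∈ X, ¬ IsEndpoint p a

/-- `p` is an inner-isolated vertex of the arc `b` with respect to `X`: `p` is isolated,
`b` is an overarc of `p`, and no arc of `X` of which `b` is an overarc is an overarc of `p`. -/
def InnerIsolatedOf (X : Set Arc) (b : Arc) (p : ℤ) : Prop :=
  Isolated X p ∧ OverarcOfVertex b p ∧ ∀ c ∈ X, OverarcOf b c → ¬ OverarcOfVertex c p

/-- `p` is an outer-isolated vertex of `X`: isolated with no overarc in `X`. -/
def OuterIsolated (X : Set Arc) (p : ℤ) : Prop :=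
  Isolated X p ∧ ∀ b ∈ X, ¬ OverarcOfVertex b p

/-- A combinatorial `w`-Hom configuration: a set of `d`-admissible arcs (`d = w - 1`),
pairwise noncrossing, such that every arc has exactly `|w| - 1` inner-isolated vertices
and there are at most `|w|` outer-isolated vertices. -/
def IsHomConfig (w : ℤ) (S : Set Arc) : Prop :=
  (∀ a ∈ S, IsAdmissible w a) ∧
  (∀ a ∈ S, ∀ b ∈ S, a ≠ b → ¬ Cross a b) ∧
  (∀ a ∈ S, {p : ℤ | InnerIsolatedOf S a p}.encard = ((-w - 1).toNat : ℕ∞)) ∧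
  {p : ℤ | OuterIsolated S p}.encard ≤ ((-w).toNat : ℕ∞)

/-- A combinatorial `w`-Riedtmann configuration: a `w`-Hom configuration with at most
`|w| - 1` outer-isolated vertices. -/
def IsRiedtmann (w : ℤ) (S : Set Arc) : Prop :=
  IsHomConfig w S ∧ {p : ℤ | OuterIsolated S p}.encard ≤ ((-w - 1).toNat : ℕ∞)

/-- A combinatorial `w`-simple-minded system: a `w`-Riedtmann configuration in which
every arc has an overarc. -/
def IsSMS (w : ℤ) (S : Set Arc) : Prop :=
  IsRiedtmann w S ∧ ∀ a ∈ S, ∃ b ∈ S, OverarcOf b a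

/-- `t` is a replacement of `s` in the `w`-Hom configuration `S`. -/
def IsReplacement (w : ℤ) (S : Set Arc) (s t : Arc) : Prop :=
  t ≠ s ∧ IsHomConfig w ((S \ {s}) ∪ {t})

/-- `c` is a Ptolemy arc of class I associated to the strictly crossing arcs `a` and `b`:
one of the four arcs joining an endpoint of `a` to an endpoint of `b`. -/
def IsPtolemyI (a b c : Arc) : Prop :=
  StrictCross a b ∧ c.2 < c.1 ∧
    ((IsEndpoint c.1 a ∧ IsEndpoint c.2 b) ∨ (IsEndpoint c.1 b ∧ IsEndpoint c.2 a))

/-- `c` is a Ptolemy arc of class II associated to the neighbouring arcs `a` and `b`: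
the distance `1` is realised by endpoints `p` and `p - 1`, and `c` joins the endpoint of
`a` other than `p, p-1` to the endpoint of `b` other than `p, p-1`. -/
def IsPtolemyII (a b c : Arc) : Prop :=
  ¬ Cross a b ∧
  ∃ p e f : ℤ,
    (((IsEndpoint p a ∧ IsEndpoint (p - 1) b) ∧ (IsEndpoint e a ∧ e ≠ p) ∧
        (IsEndpoint f b ∧ f ≠ p - 1)) ∨
     ((IsEndpoint p b ∧ IsEndpoint (p - 1) a) ∧ (IsEndpoint e b ∧ e ≠ p) ∧
        (IsEndpoint f a ∧ f ≠ p - 1))) ∧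
    c = (max e f, min e f)

/-- `Y` is a set of `d`-admissible arcs closed under adjoining `d`-admissible Ptolemy arcs
of classes I and II. -/
def PtolemyClosed (w : ℤ) (Y : Set Arc) : Prop :=
  (∀ a ∈ Y, IsAdmissible w a) ∧
  ∀ a ∈ Y, ∀ b ∈ Y, ∀ c : Arc,
    (IsPtolemyI a b c ∨ IsPtolemyII a b c) → IsAdmissible w c → c ∈ Y

/-- The Ptolemy closure of `X`: the smallest set of `d`-admissible arcs containing `X`
and closed under adjoining `d`-admissible Ptolemy arcs of classes I and II. -/
def PtolemyClosure (w : ℤ) (X : Set Arc) : Set Arc :=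
  ⋂₀ {Y : Set Arc | X ⊆ Y ∧ PtolemyClosed w Y}

/-- `p` is a left fountain of `A`: infinitely many arcs of `A` have source `p`. -/
def LeftFountain (A : Set Arc) (p : ℤ) : Prop := {a ∈ A | a.1 = p}.Infinite

/-- `p` is a right fountain of `A`: infinitely many arcs of `A` have target `p`. -/
def RightFountain (A : Set Arc) (p : ℤ) : Prop := {a ∈ A | a.2 = p}.Infinite

/-- The set `X_S = { (t + j, u + j) : (t,u) ∈ S, 0 ≤ j ≤ |w| - 1 }`, corresponding to the
union of the shifted copies `Σ^i S` for `w + 1 ≤ i ≤ 0`. -/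
def ShiftFamily (w : ℤ) (S : Set Arc) : Set Arc :=
  {c : Arc | ∃ a ∈ S, ∃ j : ℤ, 0 ≤ j ∧ j ≤ -w - 1 ∧ c = (a.1 + j, a.2 + j)}

section Stmt7Aux

lemma cross_symm {a b : Arc} (h : Cross a b) : Cross b a := by
  simp only [Cross, SharesEndpoint, StrictCross] at h ⊢; omega

variable {w : ℤ} {S : Set Arc} {s : Arc}

lemma span_pos (hw : w ≤ -1) (hS : IsHomConfig w S) {a : Arc} (ha : a ∈ S) : a.2 < a.1 := by
  have h := (hS.1 a ha).1; omega

lemma noncross_unfold (hS : IsHomConfig w S) {a b : Arc} (ha : a ∈ S) (hb : b ∈ S)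
    (hab : a ≠ b) :
    a.1 ≠ b.1 ∧ a.1 ≠ b.2 ∧ a.2 ≠ b.1 ∧ a.2 ≠ b.2 ∧
    ¬(a.2 < b.2 ∧ b.2 < a.1 ∧ a.1 < b.1) ∧ ¬(b.2 < a.2 ∧ a.2 < b.1 ∧ b.1 < a.1) := by
  have h := hS.2.1 a ha b hb hab
  simp only [Cross, SharesEndpoint, StrictCross] at h
  omega

lemma ends_outer (hw : w ≤ -1) (hS : IsHomConfig w S) (hs : s ∈ S)
    (hnoover : ∀ b ∈ S, ¬ OverarcOf b s) {p : ℤ} (hp : p = s.1 ∨ p = s.2) :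
    OuterIsolated (S \ {s}) p := by
  have hsp := span_pos hw hS hs
  constructor
  · intro c hc hend
    have h6 := noncross_unfold hS hc.1 hs hc.2
    simp only [IsEndpoint] at hend
    have hcsp := span_pos hw hS hc.1
    omega
  · intro b hb hov
    have h6 := noncross_unfold hS hb.1 hs hb.2
    have hbsp := span_pos hw hS hb.1
    have hno := hnoover b hb.1
    simp only [OverarcOf] at hno
    simp only [OverarcOfVertex] at hov
    omega

lemma inner_eq (hw : w ≤ -1) (hS : IsHomConfig w S) (hs : s ∈ S)
    (hnoover : ∀ b ∈ S, ¬ OverarcOf b s) {c : Arc} (hc : c ∈ S \ {s}) (p : ℤ) :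
    InnerIsolatedOf (S \ {s}) c p ↔ InnerIsolatedOf S c p := by
  constructor
  · rintro ⟨hiso, hov, hmin⟩
    refine ⟨?_, hov, ?_⟩
    · intro e he hend
      by_cases hes : e = s
      · subst hes
        exact (ends_outer hw hS hs hnoover (by simpa [IsEndpoint] using hend)).2 c hc hov
      · exact hiso e ⟨he, hes⟩ hend
    · intro e he hce hovp
      by_cases hes : e = s
      · subst hes; exact hnoover c hc.1 hce
      · exact hmin e ⟨he, hes⟩ hce hovp
  · rintro ⟨hiso, hov, hmin⟩
    exact ⟨fun e he => hiso e he.1, hov, fun e he => hmin e he.1⟩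

lemma OT_eq (hw : w ≤ -1) (hS : IsHomConfig w S) (hs : s ∈ S)
    (hnoover : ∀ b ∈ S, ¬ OverarcOf b s) :
    {p : ℤ | OuterIsolated (S \ {s}) p}
      = ({p : ℤ | OuterIsolated S p} ∪ {s.1, s.2}) ∪ {p : ℤ | InnerIsolatedOf S s p} := by
  have hsp := span_pos hw hS hs
  ext p
  simp only [Set.mem_setOf_eq, Set.mem_union, Set.mem_insert_iff, Set.mem_singleton_iff]
  constructor
  · rintro ⟨hiso, hnov⟩
    by_cases hpe : p = s.1 ∨ p = s.2
    · exact Or.inl (Or.inr hpe)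
    · have hisoS : Isolated S p := by
        intro e he hend
        by_cases hes : e = s
        · subst hes; exact hpe (by simpa [IsEndpoint] using hend)
        · exact hiso e ⟨he, hes⟩ hend
      by_cases hovS : ∃ b ∈ S, OverarcOfVertex b p
      · obtain ⟨b, hb, hovb⟩ := hovS
        have hbs : b = s := by
          by_contra hne; exact hnov b ⟨hb, hne⟩ hovb
        subst hbs
        refine Or.inr ⟨hisoS, hovb, ?_⟩
        intro e he hse hovp
        refine hnov e ⟨he, ?_⟩ hovp
        rintro rfl
        exact absurd hse.1 (by omega)
      · exact Or.inl (Or.inl ⟨hisoS, fun b hb hov => hovS ⟨b, hb, hov⟩⟩)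
  · rintro ((⟨hiso, hnov⟩ | hp) | ⟨hiso, hov, hmin⟩)
    · exact ⟨fun e he => hiso e he.1, fun b hb => hnov b hb.1⟩
    · exact ends_outer hw hS hs hnoover hp
    · refine ⟨fun e he => hiso e he.1, ?_⟩
      intro e he hovp
      have h6 := noncross_unfold hS he.1 hs he.2
      have hesp := span_pos hw hS he.1
      have : OverarcOf s e ∨ OverarcOf e s := by
        simp only [OverarcOf, OverarcOfVertex] at hov hovp ⊢
        omega
      rcases this with h | h
      · exact hmin e he.1 h hovp
      · exact hnoover e he.1 h

lemma exists_min_overarc (hw : w ≤ -1) (hS : IsHomConfig w S) {X : Set Arc} (hX : X ⊆ S)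
    {p : ℤ} {e0 : Arc} (he0 : e0 ∈ X) (hov : OverarcOfVertex e0 p) :
    ∃ c ∈ X, OverarcOfVertex c p ∧ ∀ e ∈ X, OverarcOf c e → ¬ OverarcOfVertex e p := by
  have hMfin : {c ∈ X | OverarcOfVertex c p ∧ c.1 ≤ e0.1}.Finite := by
    apply Set.Finite.of_finite_image (f := fun c => c.1)
    · apply Set.Finite.subset (Set.finite_Ioc p e0.1)
      rintro q ⟨c, hc, rfl⟩; exact ⟨hc.2.1.2, hc.2.2⟩
    · intro c hc c' hc' hcc
      by_contra hne
      have h6 := noncross_unfold hS (hX hc.1) (hX hc'.1) hne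
      exact h6.1 hcc
  have hMne : {c ∈ X | OverarcOfVertex c p ∧ c.1 ≤ e0.1}.Nonempty := ⟨e0, he0, hov, le_refl _⟩
  obtain ⟨c, hcM, hmin⟩ := Set.exists_min_image _ (fun c => c.1) hMfin hMne
  refine ⟨c, hcM.1, hcM.2.1, ?_⟩
  intro e he hce hovp
  have h1 : e.1 < c.1 := hce.2.2
  have h2 : c.1 ≤ e0.1 := hcM.2.2
  have heM : e ∈ {c ∈ X | OverarcOfVertex c p ∧ c.1 ≤ e0.1} := ⟨he, hovp, by omega⟩
  have := hmin e heM
  omega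


lemma OT_encard (hw : w ≤ -1) (hS : IsHomConfig w S) (hs : s ∈ S)
    (hnoover : ∀ b ∈ S, ¬ OverarcOf b s) {k : ℕ}
    (hout : {p : ℤ | OuterIsolated S p}.encard = (k : ℕ∞)) :
    {p : ℤ | OuterIsolated (S \ {s}) p}.encard = ((k + (-w-1).toNat + 2 : ℕ) : ℕ∞) := by
  have hsp := span_pos hw hS hs
  rw [OT_eq hw hS hs hnoover]
  have hinner := hS.2.2.1 s hs
  have hd1 : Disjoint {p : ℤ | OuterIsolated S p} ({s.1, s.2} : Set ℤ) := by
    rw [Set.disjoint_left]; rintro p ⟨hiso, -⟩ hp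
    exact hiso s hs (by simpa [IsEndpoint] using hp)
  have hd2 : Disjoint ({p : ℤ | OuterIsolated S p} ∪ {s.1, s.2})
      {p : ℤ | InnerIsolatedOf S s p} := by
    rw [Set.disjoint_left]
    rintro p (⟨-, hnov⟩ | hp) ⟨hiso, hov, -⟩
    · exact hnov s hs hov
    · simp only [Set.mem_insert_iff, Set.mem_singleton_iff] at hp
      simp only [OverarcOfVertex] at hov; omega
  rw [Set.encard_union_eq hd2, Set.encard_union_eq hd1, hout, hinner,
    Set.encard_pair (show s.1 ≠ s.2 by omega)]
  push_cast; ring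

lemma count_admissible (hw : w ≤ -1) (hS : IsHomConfig w S) (hs : s ∈ S)
    (hnoover : ∀ b ∈ S, ¬ OverarcOf b s) {x y : ℤ}
    (hx : OuterIsolated (S \ {s}) x) (hy : OuterIsolated (S \ {s}) y) (hxy : x < y)
    (hm : ({p : ℤ | OuterIsolated (S \ {s}) p} ∩ Set.Ioo x y).encard
        = (((-w-1).toNat : ℕ) : ℕ∞)) :
    IsAdmissible w (y, x) := by
  classical
  set wm := (-w-1).toNat with hwm
  have hAfin : {c ∈ S \ {s} | x < c.2 ∧ c.1 < y}.Finite := by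
    apply Set.Finite.of_finite_image (f := fun c => c.2)
    · apply Set.Finite.subset (Set.finite_Ioo x y)
      rintro q ⟨c, hc, rfl⟩
      exact ⟨hc.2.1, lt_trans (span_pos hw hS hc.1.1) hc.2.2⟩
    · intro c hc c' hc' hcc
      by_contra hne
      exact (noncross_unfold hS hc.1.1 hc'.1.1 hne).2.2.2.1 hcc
  set AF := hAfin.toFinset with hAF
  set IF : Arc → Finset ℤ :=
    fun c => (Finset.Ioo x y).filter (fun p => InnerIsolatedOf (S \ {s}) c p) with hIF
  have hIFmem : ∀ c p, p ∈ IF c ↔ (x < p ∧ p < y) ∧ InnerIsolatedOf (S \ {s}) c p := by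
    intro c p; simp [hIF, Finset.mem_filter, Finset.mem_Ioo, and_assoc]
  have hAmem : ∀ c, c ∈ AF ↔ c ∈ S \ {s} ∧ x < c.2 ∧ c.1 < y := by
    intro c; rw [hAF, Set.Finite.mem_toFinset]; rfl
  have hIFcard : ∀ c ∈ AF, (IF c).card = wm := by
    intro c hc
    rw [hAmem] at hc
    have hset : (↑(IF c) : Set ℤ) = {p : ℤ | InnerIsolatedOf S c p} := by
      ext p
      rw [Finset.mem_coe, hIFmem, Set.mem_setOf_eq, ← inner_eq hw hS hs hnoover hc.1]
      constructor
      · exact fun h => h.2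
      · intro h
        refine ⟨?_, h⟩
        have hov := h.2.1
        simp only [OverarcOfVertex] at hov
        have h1 := hc.2.1; have h2 := hc.2.2
        omega
    have hcd := hS.2.2.1 c hc.1.1
    rw [← hset, Set.encard_coe_eq_coe_finsetCard] at hcd
    exact_mod_cast hcd
  have hOmidfin : ({p : ℤ | OuterIsolated (S \ {s}) p} ∩ Set.Ioo x y).Finite :=
    Set.finite_of_encard_eq_coe hm
  set OF := hOmidfin.toFinset with hOF
  have hOFmem : ∀ p, p ∈ OF ↔ OuterIsolated (S \ {s}) p ∧ (x < p ∧ p < y) := by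
    intro p; rw [hOF, Set.Finite.mem_toFinset]
    simp [Set.mem_inter_iff, Set.mem_Ioo]
  have hOFcard : OF.card = wm := by
    have h1 : (↑OF : Set ℤ).encard = ((wm : ℕ) : ℕ∞) := by
      rw [hOF, Set.Finite.coe_toFinset]; exact hm
    rw [Set.encard_coe_eq_coe_finsetCard] at h1
    exact_mod_cast h1
  -- the partition
  have hpart : Finset.Ioo x y
      = OF ∪ (AF.image Prod.fst ∪ (AF.image Prod.snd ∪ AF.biUnion IF)) := by
    ext p
    simp only [Finset.mem_union, Finset.mem_image, Finset.mem_biUnion, Finset.mem_Ioo]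
    constructor
    · intro hp
      by_cases hiso : Isolated (S \ {s}) p
      · by_cases hov : ∃ e ∈ S \ {s}, OverarcOfVertex e p
        · obtain ⟨e0, he0, hove0⟩ := hov
          obtain ⟨c, hc, hovc, hmin⟩ :=
            exists_min_overarc hw hS (Set.diff_subset) he0 hove0
          have hcsp := span_pos hw hS hc.1
          have hovc' := hovc
          simp only [OverarcOfVertex] at hovc'
          have hcAF : c ∈ AF := by
            rw [hAmem]
            refine ⟨hc, ?_, ?_⟩
            · by_contra h
              have h1 : c.2 < x ∨ c.2 = x := by omega
              rcases h1 with h1 | h1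
              · exact hx.2 c hc ⟨h1, by omega⟩
              · exact hx.1 c hc (Or.inr h1.symm)
            · by_contra h
              have h1 : y < c.1 ∨ c.1 = y := by omega
              rcases h1 with h1 | h1
              · exact hy.2 c hc ⟨by omega, h1⟩
              · exact hy.1 c hc (Or.inl h1.symm)
          refine Or.inr (Or.inr (Or.inr ⟨c, hcAF, ?_⟩))
          rw [hIFmem]
          exact ⟨hp, hiso, hovc, hmin⟩
        · push_neg at hov
          refine Or.inl ?_
          rw [hOFmem]
          exact ⟨⟨hiso, fun b hb hovb => hov b hb hovb⟩, hp⟩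
      · rw [Isolated] at hiso; push_neg at hiso
        obtain ⟨c, hc, hend⟩ := hiso
        have hcsp := span_pos hw hS hc.1
        simp only [IsEndpoint] at hend
        rcases hend with h1 | h2
        · have hcAF : c ∈ AF := by
            rw [hAmem]
            refine ⟨hc, ?_, by omega⟩
            by_contra h
            have hh : c.2 < x ∨ c.2 = x := by omega
            rcases hh with hh | hh
            · exact hx.2 c hc ⟨hh, by omega⟩
            · exact hx.1 c hc (Or.inr hh.symm)
          exact Or.inr (Or.inl ⟨c, hcAF, h1.symm⟩)
        · have hcAF : c ∈ AF := by
            rw [hAmem]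
            refine ⟨hc, by omega, ?_⟩
            by_contra h
            have hh : y < c.1 ∨ c.1 = y := by omega
            rcases hh with hh | hh
            · exact hy.2 c hc ⟨by omega, hh⟩
            · exact hy.1 c hc (Or.inl hh.symm)
          exact Or.inr (Or.inr (Or.inl ⟨c, hcAF, h2.symm⟩))
    · rintro (h | ⟨c, hc, rfl⟩ | ⟨c, hc, rfl⟩ | ⟨c, hc, hpIF⟩)
      · rw [hOFmem] at h; exact h.2
      · rw [hAmem] at hc
        have := span_pos hw hS hc.1.1; have := hc.2.1; have := hc.2.2; omega
      · rw [hAmem] at hc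
        have := span_pos hw hS hc.1.1; have := hc.2.1; have := hc.2.2; omega
      · rw [hIFmem] at hpIF; exact hpIF.1
  -- disjointness
  have hd3 : Disjoint (AF.image Prod.snd) (AF.biUnion IF) := by
    rw [Finset.disjoint_left]
    rintro p hp hp'
    obtain ⟨c, hc, rfl⟩ := Finset.mem_image.1 hp
    rw [hAmem] at hc
    obtain ⟨c', hc', hpIF⟩ := Finset.mem_biUnion.1 hp'
    rw [hIFmem] at hpIF
    exact hpIF.2.1 c hc.1 (Or.inr rfl)
  have hd2 : Disjoint (AF.image Prod.fst) (AF.image Prod.snd ∪ AF.biUnion IF) := by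
    rw [Finset.disjoint_left]
    rintro p hp hp'
    obtain ⟨c, hc, rfl⟩ := Finset.mem_image.1 hp
    rw [hAmem] at hc
    rcases Finset.mem_union.1 hp' with h | h
    · obtain ⟨c', hc', heq⟩ := Finset.mem_image.1 h
      rw [hAmem] at hc'
      by_cases hne : c = c'
      · subst hne
        have := span_pos hw hS hc.1.1; omega
      · exact (noncross_unfold hS hc.1.1 hc'.1.1 hne).2.1 heq.symm
    · obtain ⟨c', hc', hpIF⟩ := Finset.mem_biUnion.1 h
      rw [hIFmem] at hpIF
      exact hpIF.2.1 c hc.1 (Or.inl rfl)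
  have hd1 : Disjoint OF (AF.image Prod.fst ∪ (AF.image Prod.snd ∪ AF.biUnion IF)) := by
    rw [Finset.disjoint_left]
    rintro p hp hp'
    rw [hOFmem] at hp
    rcases Finset.mem_union.1 hp' with h | h
    · obtain ⟨c, hc, heq⟩ := Finset.mem_image.1 h
      rw [hAmem] at hc
      exact hp.1.1 c hc.1 (Or.inl heq.symm)
    · rcases Finset.mem_union.1 h with h' | h'
      · obtain ⟨c, hc, heq⟩ := Finset.mem_image.1 h'
        rw [hAmem] at hc
        exact hp.1.1 c hc.1 (Or.inr heq.symm)
      · obtain ⟨c, hc, hpIF⟩ := Finset.mem_biUnion.1 h'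
        rw [hAmem] at hc
        rw [hIFmem] at hpIF
        exact hp.1.2 c hc.1 hpIF.2.2.1
  have himg1 : (AF.image Prod.fst).card = AF.card := by
    apply Finset.card_image_of_injOn
    intro c hc c' hc' h
    rw [Finset.mem_coe, hAmem] at hc hc'
    by_contra hne
    exact (noncross_unfold hS hc.1.1 hc'.1.1 hne).1 h
  have himg2 : (AF.image Prod.snd).card = AF.card := by
    apply Finset.card_image_of_injOn
    intro c hc c' hc' h
    rw [Finset.mem_coe, hAmem] at hc hc'
    by_contra hne
    exact (noncross_unfold hS hc.1.1 hc'.1.1 hne).2.2.2.1 h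
  have hbi : (AF.biUnion IF).card = AF.card * wm := by
    rw [Finset.card_biUnion]
    · rw [Finset.sum_congr rfl hIFcard, Finset.sum_const, smul_eq_mul]
    · intro c hc c' hc' hne
      rw [Finset.mem_coe, hAmem] at hc hc'
      rw [Function.onFun, Finset.disjoint_left]
      intro p hp hp'
      rw [hIFmem] at hp hp'
      have h6 := noncross_unfold hS hc.1.1 hc'.1.1 hne
      have hovp := hp.2.2.1; have hovp' := hp'.2.2.1
      have hcsp := span_pos hw hS hc.1.1
      have hcsp' := span_pos hw hS hc'.1.1
      have hcases : OverarcOf c c' ∨ OverarcOf c' c := by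
        simp only [OverarcOfVertex] at hovp hovp'
        simp only [OverarcOf]; omega
      rcases hcases with hcc | hcc
      · exact hp.2.2.2 c' hc'.1 hcc hovp'
      · exact hp'.2.2.2 c hc.1 hcc hovp
  have hcard := congrArg Finset.card hpart
  rw [Finset.card_union_of_disjoint hd1, Finset.card_union_of_disjoint hd2,
    Finset.card_union_of_disjoint hd3, Int.card_Ioo, hOFcard, himg1, himg2, hbi] at hcard
  set A := AF.card with hA
  have h0 : (0:ℤ) ≤ y - x - 1 := by omega
  have h1 : ((y - x - 1).toNat : ℤ) = y - x - 1 := Int.toNat_of_nonneg h0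
  rw [hcard] at h1
  push_cast at h1
  have hz : (y : ℤ) - x - 1 = (wm : ℤ) + ((A : ℤ) + ((A : ℤ) + (A : ℤ) * (wm : ℤ))) := h1.symm
  have hwmz : ((wm : ℕ) : ℤ) = -w - 1 := by
    rw [hwm]; exact Int.toNat_of_nonneg (by omega)
  constructor
  · show x - y ≤ w
    have hA0 : (0:ℤ) ≤ (A:ℤ) := Int.ofNat_nonneg A
    have hAw : (0:ℤ) ≤ (A:ℤ) * (wm:ℤ) := mul_nonneg hA0 (by omega)
    linarith
  · exact ⟨(A:ℤ) + 1, by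
      show x - y - 1 = (w - 1) * ((A:ℤ) + 1)
      linear_combination (-1 : ℤ) * hz + (-(A:ℤ) - 1) * hwmz⟩


lemma hom_union (hw : w ≤ -1) (hS : IsHomConfig w S) (hs : s ∈ S)
    (hnoover : ∀ b ∈ S, ¬ OverarcOf b s) {k : ℕ}
    (hout : {p : ℤ | OuterIsolated S p}.encard = (k : ℕ∞)) {x y : ℤ}
    (hx : OuterIsolated (S \ {s}) x) (hy : OuterIsolated (S \ {s}) y) (hxy : x < y)
    (hm : ({p : ℤ | OuterIsolated (S \ {s}) p} ∩ Set.Ioo x y).encard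
        = (((-w-1).toNat : ℕ) : ℕ∞)) :
    IsHomConfig w ((S \ {s}) ∪ {(y, x)}) := by
  have hadm := count_admissible hw hS hs hnoover hx hy hxy hm
  have hnc : ∀ c ∈ S \ {s}, ¬ Cross (y, x) c ∧ ¬ Cross c (y, x) := by
    intro c hc
    have hyc := hy.1 c hc; have hxc := hx.1 c hc
    simp only [IsEndpoint] at hyc hxc
    have hyo := hy.2 c hc; have hxo := hx.2 c hc
    simp only [OverarcOfVertex] at hyo hxo
    have hsp := span_pos hw hS hc.1
    constructor <;>
    · simp only [Cross, SharesEndpoint, StrictCross]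
      omega
  refine ⟨?_, ?_, ?_, ?_⟩
  · rintro c (hc | hc)
    · exact hS.1 c hc.1
    · rw [Set.mem_singleton_iff] at hc; subst hc; exact hadm
  · rintro c (hc | hc) b (hb | hb) hne
    · exact hS.2.1 c hc.1 b hb.1 hne
    · rw [Set.mem_singleton_iff] at hb; subst hb; exact (hnc c hc).2
    · rw [Set.mem_singleton_iff] at hc; subst hc; exact (hnc b hb).1
    · rw [Set.mem_singleton_iff] at hc hb; subst hc; subst hb; exact absurd rfl hne
  · rintro c (hc | hc)
    · have hset : {p : ℤ | InnerIsolatedOf ((S \ {s}) ∪ {(y, x)}) c p}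
          = {p : ℤ | InnerIsolatedOf S c p} := by
        ext p
        rw [Set.mem_setOf_eq, Set.mem_setOf_eq, ← inner_eq hw hS hs hnoover hc]
        constructor
        · rintro ⟨hiso, hov, hmin⟩
          exact ⟨fun e he => hiso e (Or.inl he), hov,
            fun e he hce hove => hmin e (Or.inl he) hce hove⟩
        · rintro ⟨hiso, hov, hmin⟩
          have hxo := hx.2 c hc; have hyo := hy.2 c hc
          refine ⟨?_, hov, ?_⟩
          · rintro e (he | he) hend
            · exact hiso e he hend
            · rw [Set.mem_singleton_iff] at he; subst he
              have hend' : p = y ∨ p = x := hend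
              have hov' : c.2 < p ∧ p < c.1 := hov
              simp only [OverarcOfVertex] at hxo hyo
              omega
          · rintro e (he | he) hce hove
            · exact hmin e he hce hove
            · rw [Set.mem_singleton_iff] at he; subst he
              have h1 : c.2 < x := hce.1
              have h2 : y < c.1 := hce.2.2
              exact hx.2 c hc ⟨h1, by omega⟩
      rw [hset]
      exact hS.2.2.1 c hc.1
    · rw [Set.mem_singleton_iff] at hc; subst hc
      have hset : {p : ℤ | InnerIsolatedOf ((S \ {s}) ∪ {(y, x)}) (y, x) p}
          = {p : ℤ | OuterIsolated (S \ {s}) p} ∩ Set.Ioo x y := by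
        ext p
        simp only [Set.mem_setOf_eq, Set.mem_inter_iff, Set.mem_Ioo]
        constructor
        · rintro ⟨hiso, hov, hmin⟩
          have hov' : x < p ∧ p < y := hov
          refine ⟨⟨fun e he => hiso e (Or.inl he), ?_⟩, hov'⟩
          intro e he hove
          have hove' : e.2 < p ∧ p < e.1 := hove
          have hsp := span_pos hw hS he.1
          have hyo := hy.2 e he; have hxo := hx.2 e he
          simp only [OverarcOfVertex] at hyo hxo
          have hyc := hy.1 e he; have hxc := hx.1 e he
          simp only [IsEndpoint] at hyc hxc
          have hce : OverarcOf (y, x) e := by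
            show x < e.2 ∧ e.2 < e.1 ∧ e.1 < y
            omega
          exact hmin e (Or.inl he) hce hove
        · rintro ⟨⟨hiso, hnov⟩, hp1, hp2⟩
          refine ⟨?_, ⟨hp1, hp2⟩, ?_⟩
          · rintro e (he | he) hend
            · exact hiso e he hend
            · rw [Set.mem_singleton_iff] at he; subst he
              have hend' : p = y ∨ p = x := hend
              omega
          · rintro e (he | he) hce hove
            · exact hnov e he hove
            · rw [Set.mem_singleton_iff] at he; subst he
              have h1 : x < x := hce.1
              omega
      rw [hset]
      exact hm
  · have hOU : {p : ℤ | OuterIsolated ((S \ {s}) ∪ {(y, x)}) p}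
        = {p : ℤ | OuterIsolated (S \ {s}) p}
          \ (insert x (insert y ({p : ℤ | OuterIsolated (S \ {s}) p} ∩ Set.Ioo x y))) := by
      ext p
      simp only [Set.mem_setOf_eq, Set.mem_diff, Set.mem_insert_iff, Set.mem_inter_iff,
        Set.mem_Ioo, not_or]
      constructor
      · rintro ⟨hiso, hnov⟩
        have hisoT : Isolated (S \ {s}) p := fun e he => hiso e (Or.inl he)
        have hnovT : ∀ b ∈ S \ {s}, ¬ OverarcOfVertex b p := fun b hb => hnov b (Or.inl hb)
        have hpx : p ≠ x := fun h => hiso (y, x) (Or.inr rfl) (Or.inr h)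
        have hpy : p ≠ y := fun h => hiso (y, x) (Or.inr rfl) (Or.inl h)
        have hpio : ¬(x < p ∧ p < y) := by
          rintro ⟨h1, h2⟩
          refine hnov (y, x) (Or.inr rfl) ?_
          show x < p ∧ p < y
          exact ⟨h1, h2⟩
        exact ⟨⟨hisoT, hnovT⟩, hpx, hpy, fun h => (hpio ⟨h.2.1, h.2.2⟩)⟩
      · rintro ⟨⟨hiso, hnov⟩, hpx, hpy, hpio⟩
        constructor
        · rintro e (he | he) hend
          · exact hiso e he hend
          · rw [Set.mem_singleton_iff] at he; subst he
            have hend' : p = y ∨ p = x := hend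
            omega
        · rintro e (he | he) hove
          · exact hnov e he hove
          · rw [Set.mem_singleton_iff] at he; subst he
            have hove' : x < p ∧ p < y := hove
            exact hpio ⟨⟨hiso, hnov⟩, hove'.1, hove'.2⟩
    rw [hOU]
    have hOT := OT_encard hw hS hs hnoover hout
    have hxO : x ∈ {p : ℤ | OuterIsolated (S \ {s}) p} := hx
    have hyO : y ∈ {p : ℤ | OuterIsolated (S \ {s}) p} := hy
    have hsub : insert x (insert y ({p : ℤ | OuterIsolated (S \ {s}) p} ∩ Set.Ioo x y))
        ⊆ {p : ℤ | OuterIsolated (S \ {s}) p} := by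
      intro p hp
      simp only [Set.mem_insert_iff, Set.mem_inter_iff] at hp
      rcases hp with h | h | hp
      · exact h ▸ hxO
      · exact h ▸ hyO
      · exact hp.1
    have hWcard : (insert x (insert y
        ({p : ℤ | OuterIsolated (S \ {s}) p} ∩ Set.Ioo x y))).encard
        = (((-w-1).toNat : ℕ) : ℕ∞) + 1 + 1 := by
      rw [Set.encard_insert_of_notMem, Set.encard_insert_of_notMem, hm]
      · rintro ⟨-, h1, h2⟩; omega
      · rintro (rfl | ⟨-, h1, h2⟩)
        · omega
        · omega
    have hdiff := Set.encard_diff_add_encard_of_subset hsub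
    rw [hWcard, hOT] at hdiff
    have hk : ({p : ℤ | OuterIsolated (S \ {s}) p}
        \ (insert x (insert y ({p : ℤ | OuterIsolated (S \ {s}) p} ∩ Set.Ioo x y)))).encard
        = (k : ℕ∞) := by
      have h2 : ((k + (-w-1).toNat + 2 : ℕ) : ℕ∞)
          = (k : ℕ∞) + ((((-w-1).toNat : ℕ) : ℕ∞) + 1 + 1) := by push_cast; ring
      rw [h2] at hdiff
      have h3 : ((((-w-1).toNat : ℕ) : ℕ∞) + 1 + 1) ≠ ⊤ := by
        have h4 : ((((-w-1).toNat : ℕ) : ℕ∞) + 1 + 1) = (((-w-1).toNat + 2 : ℕ) : ℕ∞) := by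
          push_cast; ring
        rw [h4]; exact ENat.coe_ne_top _
      exact WithTop.add_right_cancel h3 (by rw [add_assoc] at hdiff; exact hdiff)
    rw [hk]
    have hle := hS.2.2.2
    rw [hout] at hle
    exact hle

lemma forward_char (hw : w ≤ -1) (hS : IsHomConfig w S) (hs : s ∈ S)
    (hnoover : ∀ b ∈ S, ¬ OverarcOf b s) {k : ℕ}
    (hout : {p : ℤ | OuterIsolated S p}.encard = (k : ℕ∞)) {a : Arc}
    (hadm : IsAdmissible w a) (hU : IsHomConfig w ((S \ {s}) ∪ {a})) :
    OuterIsolated (S \ {s}) a.2 ∧ OuterIsolated (S \ {s}) a.1 ∧ a.2 < a.1 ∧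
      ({p : ℤ | OuterIsolated (S \ {s}) p} ∩ Set.Ioo a.2 a.1).encard
        = (((-w-1).toNat : ℕ) : ℕ∞) := by
  have hspa : a.2 < a.1 := by have := hadm.1; omega
  have hanT : a ∉ S \ {s} := by
    intro haT
    have hUeq : (S \ {s}) ∪ {a} = S \ {s} :=
      Set.union_eq_self_of_subset_right (by simpa using haT)
    have h4 := hU.2.2.2
    rw [hUeq, OT_encard hw hS hs hnoover hout] at h4
    have h5 : k + (-w-1).toNat + 2 ≤ (-w).toNat := by exact_mod_cast h4
    omega
  have amem : a ∈ (S \ {s}) ∪ {a} := Or.inr rfl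
  have hisoT : ∀ p, IsEndpoint p a → Isolated (S \ {s}) p := by
    intro p hp c hc hend
    have hne : a ≠ c := fun h => hanT (h ▸ hc)
    have h6 := noncross_unfold hU amem (Or.inl hc) hne
    simp only [IsEndpoint] at hp hend
    omega
  have hnov1 : ∀ e ∈ S \ {s}, ¬ OverarcOfVertex e a.1 := by
    intro e0 he0 hove0
    have hove0' : e0.2 < a.1 ∧ a.1 < e0.1 := hove0
    obtain ⟨c, hc, hovc, hmin⟩ := exists_min_overarc hw hS (Set.diff_subset) he0 hove0
    have hovc' : c.2 < a.1 ∧ a.1 < c.1 := hovc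
    have hnec : a ≠ c := fun h => hanT (h ▸ hc)
    have h6 := noncross_unfold hU amem (Or.inl hc) hnec
    have hcsp := span_pos hw hS hc.1
    have a1inner : InnerIsolatedOf (S \ {s}) c a.1 :=
      ⟨hisoT a.1 (Or.inl rfl), hovc, fun e he hce hove => hmin e he hce hove⟩
    have hsubset : {p : ℤ | InnerIsolatedOf ((S \ {s}) ∪ {a}) c p}
        ⊆ {p : ℤ | InnerIsolatedOf (S \ {s}) c p} := by
      rintro p ⟨hiso, hov, hmn⟩
      exact ⟨fun e he => hiso e (Or.inl he), hov,
        fun e he hce hove => hmn e (Or.inl he) hce hove⟩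
    have a1not : a.1 ∉ {p : ℤ | InnerIsolatedOf ((S \ {s}) ∪ {a}) c p} := by
      rintro ⟨hiso, -, -⟩
      exact hiso a amem (Or.inl rfl)
    have hins : insert a.1 {p : ℤ | InnerIsolatedOf ((S \ {s}) ∪ {a}) c p}
        ⊆ {p : ℤ | InnerIsolatedOf (S \ {s}) c p} := by
      rintro p (h | h)
      · exact h ▸ a1inner
      · exact hsubset h
    have hc1 := Set.encard_mono hins
    rw [Set.encard_insert_of_notMem a1not, hU.2.2.1 c (Or.inl hc)] at hc1
    have hc2 : ({p : ℤ | InnerIsolatedOf (S \ {s}) c p}).encard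
        = (((-w-1).toNat : ℕ) : ℕ∞) := by
      have hset : {p : ℤ | InnerIsolatedOf (S \ {s}) c p}
          = {p : ℤ | InnerIsolatedOf S c p} := by
        ext p; exact inner_eq hw hS hs hnoover hc p
      rw [hset]; exact hS.2.2.1 c hc.1
    rw [hc2] at hc1
    have hc3 : (((-w-1).toNat + 1 : ℕ) : ℕ∞) ≤ (((-w-1).toNat : ℕ) : ℕ∞) := by
      rw [Nat.cast_add, Nat.cast_one]; exact hc1
    have := Nat.cast_le.1 hc3
    omega
  have hnov2 : ∀ e ∈ S \ {s}, ¬ OverarcOfVertex e a.2 := by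
    intro e he hove
    have hove' : e.2 < a.2 ∧ a.2 < e.1 := hove
    have hne : a ≠ e := fun h => hanT (h ▸ he)
    have h6 := noncross_unfold hU amem (Or.inl he) hne
    have hesp := span_pos hw hS he.1
    have h1 := hnov1 e he
    simp only [OverarcOfVertex] at h1
    omega
  refine ⟨⟨hisoT a.2 (Or.inr rfl), hnov2⟩, ⟨hisoT a.1 (Or.inl rfl), hnov1⟩, hspa, ?_⟩
  have hset : {p : ℤ | OuterIsolated (S \ {s}) p} ∩ Set.Ioo a.2 a.1
      = {p : ℤ | InnerIsolatedOf ((S \ {s}) ∪ {a}) a p} := by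
    ext p
    simp only [Set.mem_inter_iff, Set.mem_setOf_eq, Set.mem_Ioo]
    constructor
    · rintro ⟨⟨hiso, hnov⟩, hp1, hp2⟩
      refine ⟨?_, ⟨hp1, hp2⟩, ?_⟩
      · rintro e (he | he) hend
        · exact hiso e he hend
        · rw [Set.mem_singleton_iff] at he; subst he
          have hend' : p = e.1 ∨ p = e.2 := hend
          omega
      · rintro e (he | he) hae hove
        · exact hnov e he hove
        · rw [Set.mem_singleton_iff] at he; subst he
          have h1 : e.2 < e.2 := hae.1
          omega
    · rintro ⟨hiso, hov, hmin⟩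
      have hov' : a.2 < p ∧ p < a.1 := hov
      refine ⟨⟨fun e he => hiso e (Or.inl he), ?_⟩, hov'.1, hov'.2⟩
      intro e he hove
      have hove' : e.2 < p ∧ p < e.1 := hove
      have hne : a ≠ e := fun h => hanT (h ▸ he)
      have h6 := noncross_unfold hU amem (Or.inl he) hne
      have hesp := span_pos hw hS he.1
      have h1 := hnov1 e he; have h2 := hnov2 e he
      simp only [OverarcOfVertex] at h1 h2
      have hae : OverarcOf a e := by
        show a.2 < e.2 ∧ e.2 < e.1 ∧ e.1 < a.1
        omega
      exact hmin e (Or.inl he) hae hove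
  rw [hset]
  exact hU.2.2.1 a amem


lemma enum_card {O : Set ℤ} {k wm : ℕ} (hcard : O.encard = ((k + wm + 2 : ℕ) : ℕ∞)) :
    {a : Arc | a.2 ∈ O ∧ a.1 ∈ O ∧ a.2 < a.1 ∧
        (O ∩ Set.Ioo a.2 a.1).encard = ((wm : ℕ) : ℕ∞)}.encard
      = ((k + 1 : ℕ) : ℕ∞) := by
  classical
  have hfin : O.Finite := Set.finite_of_encard_eq_coe hcard
  have hFcard : hfin.toFinset.card = k + wm + 2 := by
    have h1 : (↑hfin.toFinset : Set ℤ).encard = ((k + wm + 2 : ℕ) : ℕ∞) := by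
      rw [Set.Finite.coe_toFinset]; exact hcard
    rw [Set.encard_coe_eq_coe_finsetCard] at h1
    exact_mod_cast h1
  set N := k + wm + 2 with hN
  let e := hfin.toFinset.orderIsoOfFin hFcard
  let E : Fin N → ℤ := fun i => (e i : ℤ)
  have hEmono : StrictMono E := by
    intro i j h
    exact Subtype.coe_lt_coe.2 (e.strictMono h)
  have hEmem : ∀ i, E i ∈ O := by
    intro i
    have := (e i).2
    rwa [Set.Finite.mem_toFinset] at this
  have hsurj : ∀ q ∈ O, ∃ i, E i = q := by
    intro q hq
    obtain ⟨i, hi⟩ := e.surjective ⟨q, (Set.Finite.mem_toFinset hfin).2 hq⟩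
    exact ⟨i, congrArg Subtype.val hi⟩
  have hbetween : ∀ i j : Fin N, i < j →
      (O ∩ Set.Ioo (E i) (E j)).encard = (((j : ℕ) - i - 1 : ℕ) : ℕ∞) := by
    intro i j hij
    have hset : O ∩ Set.Ioo (E i) (E j) = E '' Set.Ioo i j := by
      ext q
      simp only [Set.mem_inter_iff, Set.mem_Ioo, Set.mem_image]
      constructor
      · rintro ⟨hq, h1, h2⟩
        obtain ⟨m, rfl⟩ := hsurj q hq
        exact ⟨m, ⟨hEmono.lt_iff_lt.1 h1, hEmono.lt_iff_lt.1 h2⟩, rfl⟩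
      · rintro ⟨m, ⟨h1, h2⟩, rfl⟩
        exact ⟨hEmem m, hEmono h1, hEmono h2⟩
    rw [hset, (hEmono.injective.injOn).encard_image, ← Finset.coe_Ioo,
      Set.encard_coe_eq_coe_finsetCard, Fin.card_Ioo]
  let g : Fin (k + 1) → Arc := fun i =>
    (E ⟨(i : ℕ) + wm + 1, by omega⟩, E ⟨(i : ℕ), by omega⟩)
  have hgset : {a : Arc | a.2 ∈ O ∧ a.1 ∈ O ∧ a.2 < a.1 ∧
      (O ∩ Set.Ioo a.2 a.1).encard = ((wm : ℕ) : ℕ∞)} = g '' Set.univ := by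
    ext a
    simp only [Set.mem_setOf_eq, Set.mem_image, Set.mem_univ, true_and]
    constructor
    · rintro ⟨h2, h1, h3, h4⟩
      obtain ⟨i, hi⟩ := hsurj a.2 h2
      obtain ⟨j, hj⟩ := hsurj a.1 h1
      have hij : i < j := by
        apply hEmono.lt_iff_lt.1; rw [hi, hj]; exact h3
      have hcnt := hbetween i j hij
      rw [hi, hj, h4] at hcnt
      have hcnt' : wm = (j : ℕ) - i - 1 := by exact_mod_cast hcnt
      have hijN : (j : ℕ) < N := j.2
      have hival : (i : ℕ) < k + 1 := by omega
      refine ⟨⟨(i : ℕ), hival⟩, ?_⟩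
      have hjval : (⟨(i : ℕ) + wm + 1, by omega⟩ : Fin N) = j := by
        apply Fin.ext; simp; omega
      show (E ⟨(i : ℕ) + wm + 1, _⟩, E ⟨(i : ℕ), _⟩) = a
      rw [hjval]
      have hival2 : (⟨(i : ℕ), by omega⟩ : Fin N) = i := by apply Fin.ext; simp
      rw [hival2, hi, hj]
    · rintro ⟨i, rfl⟩
      have hlt : (⟨(i : ℕ), by omega⟩ : Fin N) < ⟨(i : ℕ) + wm + 1, by omega⟩ := by
        simp only [Fin.lt_def]; omega
      refine ⟨hEmem _, hEmem _, hEmono hlt, ?_⟩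
      have hcnt := hbetween _ _ hlt
      rw [hcnt]
      congr 1
      simp only [Fin.val_mk]
      omega
  have hginj : Function.Injective g := by
    intro i i' h
    have h2 : E ⟨(i : ℕ), by omega⟩ = E ⟨(i' : ℕ), by omega⟩ := congrArg Prod.snd h
    have h3 := hEmono.injective h2
    have h4 : (i : ℕ) = (i' : ℕ) := by
      have := congrArg Fin.val h3
      simpa using this
    exact Fin.ext h4
  rw [hgset, (hginj.injOn).encard_image]
  rw [← Finset.coe_univ, Set.encard_coe_eq_coe_finsetCard, Finset.card_univ, Fintype.card_fin]

end Stmt7Aux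

/-- if `S` is a combinatorial `w`-Hom configuration (`w ≤ -1`) with exactly
`k` outer-isolated vertices and `s ∈ S` has no overarc in `S`, then there are exactly
`k + 1` `d`-admissible arcs `a` such that `(S \ {s}) ∪ {a}` is a combinatorial `w`-Hom
configuration, one of them being `s` itself; equivalently, `s` has exactly `k`
replacements. -/
theorem stmt_7 (w : ℤ) (hw : w ≤ -1) (S : Set Arc) (hS : IsHomConfig w S) (k : ℕ)
    (hout : {p : ℤ | OuterIsolated S p}.encard = (k : ℕ∞))
    (s : Arc) (hs : s ∈ S) (hnoover : ∀ b ∈ S, ¬ OverarcOf b s) :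
    {a : Arc | IsAdmissible w a ∧ IsHomConfig w ((S \ {s}) ∪ {a})}.encard
        = ((k + 1 : ℕ) : ℕ∞) ∧
      s ∈ {a : Arc | IsAdmissible w a ∧ IsHomConfig w ((S \ {s}) ∪ {a})} ∧
      {t : Arc | IsReplacement w S s t}.encard = (k : ℕ∞) := by
  have hchar : {a : Arc | IsAdmissible w a ∧ IsHomConfig w ((S \ {s}) ∪ {a})}
      = {a : Arc | a.2 ∈ {p : ℤ | OuterIsolated (S \ {s}) p}
          ∧ a.1 ∈ {p : ℤ | OuterIsolated (S \ {s}) p} ∧ a.2 < a.1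
          ∧ ({p : ℤ | OuterIsolated (S \ {s}) p} ∩ Set.Ioo a.2 a.1).encard
              = (((-w-1).toNat : ℕ) : ℕ∞)} := by
    ext a
    simp only [Set.mem_setOf_eq]
    constructor
    · rintro ⟨h1, h2⟩
      exact forward_char hw hS hs hnoover hout h1 h2
    · rintro ⟨h2, h1, h3, h4⟩
      have hadm := count_admissible hw hS hs hnoover h2 h1 h3 h4
      have hhom := hom_union hw hS hs hnoover hout h2 h1 h3 h4
      rw [Prod.mk.eta] at hadm hhom
      exact ⟨hadm, hhom⟩
  have hsmem : s ∈ {a : Arc | IsAdmissible w a ∧ IsHomConfig w ((S \ {s}) ∪ {a})} := by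
    refine ⟨hS.1 s hs, ?_⟩
    have heq : (S \ {s}) ∪ {s} = S := by
      rw [Set.diff_union_self]
      exact Set.union_eq_self_of_subset_right (Set.singleton_subset_iff.2 hs)
    rw [heq]; exact hS
  have hOT := OT_encard hw hS hs hnoover hout
  have hmain : {a : Arc | IsAdmissible w a ∧ IsHomConfig w ((S \ {s}) ∪ {a})}.encard
      = ((k + 1 : ℕ) : ℕ∞) := by
    rw [hchar]
    exact enum_card hOT
  refine ⟨hmain, hsmem, ?_⟩
  have hrep : {t : Arc | IsReplacement w S s t}
      = {a : Arc | IsAdmissible w a ∧ IsHomConfig w ((S \ {s}) ∪ {a})} \ {s} := by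
    ext t
    simp only [Set.mem_setOf_eq, Set.mem_diff, Set.mem_singleton_iff]
    constructor
    · rintro ⟨hne, hcfg⟩
      exact ⟨⟨hcfg.1 t (Or.inr rfl), hcfg⟩, hne⟩
    · rintro ⟨⟨-, hcfg⟩, hne⟩
      exact ⟨hne, hcfg⟩
  rw [hrep]
  have h1 := Set.encard_diff_singleton_add_one hsmem
  rw [hmain] at h1
  have h2 : ((k + 1 : ℕ) : ℕ∞) = (k : ℕ∞) + 1 := by push_cast; ring
  rw [h2] at h1
  exact WithTop.add_right_cancel (by simp : (1 : ℕ∞) ≠ ⊤) h1
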